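/- In the algebra B = B_q(s,t,φ), the relation E²F − (q^{−2s}+q^{−2t})EFE + q^{−2s−2t}FE² = E·φ_{s,t}(K) holds, where φ_{s,t}(λ) = φ(q⁻¹λ) − (q^{−2s}+q^{−2t})φ(qλ) + q^{−2s−2t}φ(q³λ). -/

import Mathlib

open LaurentPolynomial

noncomputable section

/-- The Laurent polynomial `ψ(c·λ)`. -/
noncomputable def lscale {F : Type*} [Field F] (c : F) (ψ : LaurentPolynomial F) :
    LaurentPolynomial F :=
  Finsupp.sum ψ.coeff fun i a => (a * c ^ i) • (T i : LaurentPolynomial F)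

/-- The map `ψ ↦ ψ_{s,t}` of Definition 2.4:
`ψ_{s,t}(λ) = ψ(q⁻¹λ) − (q^{−2s}+q^{−2t})ψ(qλ) + q^{−2s−2t}ψ(q³λ)`. -/
noncomputable def adu {F : Type*} [Field F] (q : F) (s t : ℤ) (ψ : LaurentPolynomial F) :
    LaurentPolynomial F :=
  lscale q⁻¹ ψ - (q ^ (-2*s) + q ^ (-2*t)) • lscale q ψ + q ^ (-2*s-2*t) • lscale (q^3) ψ

/-- `F[λ,λ⁻¹]_{s,t}`: the span of the monomials `λ^i`, `i ∉ {s,t}`. -/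
noncomputable def lstSpan (F : Type*) [Field F] (s t : ℤ) :
    Submodule F (LaurentPolynomial F) :=
  Submodule.span F {ψ : LaurentPolynomial F | ∃ i : ℤ, i ≠ s ∧ i ≠ t ∧ ψ = T i}

/-- `x^i` for `i : ℤ`, interpreting negative powers via a designated inverse `y`. -/
def zpow2 {B : Type*} [Monoid B] (x y : B) (i : ℤ) : B :=
  if 0 ≤ i then x ^ i.toNat else y ^ (-i).toNat

/-- Evaluation `ψ(c·x)` of a Laurent polynomial `ψ`, where `y` plays the role of `x⁻¹`. -/
noncomputable def leval {F : Type*} [Field F] {B : Type*} [Ring B] [Algebra F B]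
    (ψ : LaurentPolynomial F) (c : F) (x y : B) : B :=
  Finsupp.sum ψ.coeff fun i a => (a * c ^ i) • zpow2 x y i

inductive BGen | cs | ct | e | f | k | kinv
deriving DecidableEq

open FreeAlgebra in
/-- Defining relations for `B_q(s,t,φ)`. -/
inductive BRel {F : Type*} [Field F] (q : F) (s t : ℤ) (φ : LaurentPolynomial F) :
    FreeAlgebra F BGen → FreeAlgebra F BGen → Prop
  | csCentral (x) : BRel q s t φ (ι F BGen.cs * x) (x * ι F BGen.cs)
  | ctCentral (x) : BRel q s t φ (ι F BGen.ct * x) (x * ι F BGen.ct)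
  | kkinv : BRel q s t φ (ι F BGen.k * ι F BGen.kinv) 1
  | kinvk : BRel q s t φ (ι F BGen.kinv * ι F BGen.k) 1
  | ke : BRel q s t φ (ι F BGen.k * ι F BGen.e) (q ^ 2 • (ι F BGen.e * ι F BGen.k))
  | kf : BRel q s t φ (ι F BGen.k * ι F BGen.f) ((q ^ 2)⁻¹ • (ι F BGen.f * ι F BGen.k))
  | fe : BRel q s t φ (ι F BGen.f * ι F BGen.e)
      (q ^ s • (ι F BGen.cs * zpow2 (ι F BGen.k) (ι F BGen.kinv) s)
        + q ^ t • (ι F BGen.ct * zpow2 (ι F BGen.k) (ι F BGen.kinv) t)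
        + leval φ q (ι F BGen.k) (ι F BGen.kinv))
  | ef : BRel q s t φ (ι F BGen.e * ι F BGen.f)
      (q ^ (-s) • (ι F BGen.cs * zpow2 (ι F BGen.k) (ι F BGen.kinv) s)
        + q ^ (-t) • (ι F BGen.ct * zpow2 (ι F BGen.k) (ι F BGen.kinv) t)
        + leval φ q⁻¹ (ι F BGen.k) (ι F BGen.kinv))

/-- The algebra `B_q(s,t,φ)`. -/
def BAlg {F : Type*} [Field F] (q : F) (s t : ℤ) (φ : LaurentPolynomial F) : Type _ :=
  RingQuot (BRel q s t φ)

noncomputable instance {F : Type*} [Field F] (q : F) (s t : ℤ) (φ : LaurentPolynomial F) :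
    Ring (BAlg q s t φ) := inferInstanceAs (Ring (RingQuot _))

noncomputable instance {F : Type*} [Field F] (q : F) (s t : ℤ) (φ : LaurentPolynomial F) :
    Algebra F (BAlg q s t φ) := inferInstanceAs (Algebra F (RingQuot _))

/-- The images of the generators in `B_q(s,t,φ)`. -/
noncomputable def bgen {F : Type*} [Field F] (q : F) (s t : ℤ) (φ : LaurentPolynomial F)
    (g : BGen) : BAlg q s t φ :=
  RingQuot.mkAlgHom F (BRel q s t φ) (FreeAlgebra.ι F g)


namespace Aux10

variable {F : Type*} [Field F]

theorem zpow2_map {B C : Type*} [Ring B] [Ring C] [Algebra F B] [Algebra F C]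
    (g : B →ₐ[F] C) (x y : B) (i : ℤ) : g (zpow2 x y i) = zpow2 (g x) (g y) i := by
  unfold zpow2; split_ifs <;> simp

theorem leval_map {B C : Type*} [Ring B] [Ring C] [Algebra F B] [Algebra F C]
    (g : B →ₐ[F] C) (ψ : LaurentPolynomial F) (c : F) (x y : B) :
    g (leval ψ c x y) = leval ψ c (g x) (g y) := by
  unfold _root_.leval
  rw [map_finsuppSum]
  exact Finsupp.sum_congr fun i _ => by rw [map_smul, zpow2_map]

variable {B : Type*} [Ring B] [Algebra F B]

theorem leval_single (i : ℤ) (a c : F) (x y : B) :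
    leval (AddMonoidAlgebra.single i a : LaurentPolynomial F) c x y = (a * c ^ i) • zpow2 x y i := by
  unfold _root_.leval
  rw [AddMonoidAlgebra.coeff_single]
  exact Finsupp.sum_single_index (by simp)

theorem leval_add (ψ₁ ψ₂ : LaurentPolynomial F) (c : F) (x y : B) :
    leval (ψ₁ + ψ₂) c x y = leval ψ₁ c x y + leval ψ₂ c x y := by
  unfold _root_.leval
  rw [AddMonoidAlgebra.coeff_add]
  exact Finsupp.sum_add_index' (fun i => by simp) (fun i a b => by rw [add_mul, add_smul])

theorem leval_smul (b : F) (ψ : LaurentPolynomial F) (c : F) (x y : B) :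
    leval (b • ψ) c x y = b • leval ψ c x y := by
  unfold _root_.leval
  rw [AddMonoidAlgebra.coeff_smul, Finsupp.sum_smul_index' (fun i => by simp), Finsupp.smul_sum]
  exact Finsupp.sum_congr fun i _ => by rw [smul_eq_mul, mul_assoc, mul_smul]

theorem leval_sub (ψ₁ ψ₂ : LaurentPolynomial F) (c : F) (x y : B) :
    leval (ψ₁ - ψ₂) c x y = leval ψ₁ c x y - leval ψ₂ c x y := by
  have h : ψ₁ - ψ₂ = ψ₁ + (-1 : F) • ψ₂ := by rw [neg_one_smul, sub_eq_add_neg]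
  rw [h, leval_add, leval_smul, neg_one_smul, sub_eq_add_neg]

theorem lscale_zero (c : F) : lscale c (0 : LaurentPolynomial F) = 0 := by
  unfold lscale; rw [AddMonoidAlgebra.coeff_zero]; exact Finsupp.sum_zero_index

theorem lscale_add (c : F) (ψ₁ ψ₂ : LaurentPolynomial F) :
    lscale c (ψ₁ + ψ₂) = lscale c ψ₁ + lscale c ψ₂ := by
  unfold lscale
  rw [AddMonoidAlgebra.coeff_add]
  exact Finsupp.sum_add_index' (fun i => by simp) (fun i a b => by rw [add_mul, add_smul])

theorem lscale_single (c : F) (i : ℤ) (a : F) :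
    lscale c (AddMonoidAlgebra.single i a : LaurentPolynomial F) = (a * c ^ i) • T i := by
  unfold lscale
  rw [AddMonoidAlgebra.coeff_single]
  exact Finsupp.sum_single_index (by simp)

theorem smul_T (b : F) (i : ℤ) : b • (T i : LaurentPolynomial F) = AddMonoidAlgebra.single i b := by
  rw [T, AddMonoidAlgebra.smul_single', mul_one]

theorem leval_lscale_one (c : F) (ψ : LaurentPolynomial F) (x y : B) :
    leval (lscale c ψ) 1 x y = leval ψ c x y := by
  induction ψ using AddMonoidAlgebra.induction with
  | zero => simp [_root_.leval, lscale_zero, Finsupp.sum_zero_index]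
  | single_add i a f hif ha ih =>
      rw [lscale_add, leval_add, leval_add, ih, lscale_single, smul_T, leval_single,
        leval_single, one_zpow, mul_one]

theorem leval_adu (q : F) (s t : ℤ) (φ : LaurentPolynomial F) (x y : B) :
    leval (adu q s t φ) 1 x y
      = leval φ q⁻¹ x y - (q ^ (-2*s) + q ^ (-2*t)) • leval φ q x y
          + q ^ (-2*s-2*t) • leval φ (q^3) x y := by
  unfold adu
  rw [leval_add, leval_sub, leval_smul, leval_smul, leval_lscale_one, leval_lscale_one,
    leval_lscale_one]

theorem pow_comm_left (x e : B) (r : F) (h : x * e = r • (e * x)) :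
    ∀ n : ℕ, x ^ n * e = r ^ n • (e * x ^ n) := by
  intro n
  induction n with
  | zero => simp
  | succ n ih =>
      calc x ^ (n+1) * e = x ^ n * (x * e) := by rw [pow_succ, mul_assoc]
      _ = x ^ n * (r • (e * x)) := by rw [h]
      _ = r • ((x ^ n * e) * x) := by rw [mul_smul_comm, mul_assoc]
      _ = r • ((r ^ n • (e * x ^ n)) * x) := by rw [ih]
      _ = (r ^ n * r) • (e * (x ^ n * x)) := by
            rw [smul_mul_assoc, smul_smul, mul_assoc, mul_comm r]
      _ = r ^ (n+1) • (e * x ^ (n+1)) := by rw [pow_succ, pow_succ]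

theorem zpow2_comm (x y e : B) (q : F) (hq : q ≠ 0) (hxy : x * y = 1) (hyx : y * x = 1)
    (h : x * e = q ^ 2 • (e * x)) :
    ∀ i : ℤ, zpow2 x y i * e = q ^ (2*i) • (e * zpow2 x y i) := by
  have h2 : (q ^ 2 : F) ≠ 0 := pow_ne_zero _ hq
  have he : e * y = q ^ 2 • (y * e) := by
    calc e * y = y * (x * e) * y := by rw [← mul_assoc, hyx, one_mul]
    _ = y * (q ^ 2 • (e * x)) * y := by rw [h]
    _ = q ^ 2 • (y * e * (x * y)) := by
          rw [mul_smul_comm, smul_mul_assoc, mul_assoc, mul_assoc, mul_assoc]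
    _ = q ^ 2 • (y * e) := by rw [hxy, mul_one]
  have hy : y * e = (q ^ 2)⁻¹ • (e * y) := by
    rw [he, smul_smul, inv_mul_cancel₀ h2, one_smul]
  intro i
  unfold zpow2
  split_ifs with hi
  · rw [pow_comm_left x e _ h i.toNat]
    congr 1
    have h2i : (2*i) = ((2 * i.toNat : ℕ) : ℤ) := by omega
    rw [h2i, zpow_natCast, pow_mul]
  · rw [pow_comm_left y e _ hy (-i).toNat]
    congr 1
    have h2i : (2*i) = -((2 * (-i).toNat : ℕ) : ℤ) := by omega
    rw [h2i, zpow_neg, zpow_natCast, pow_mul, inv_pow]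

theorem leval_mul_comm (q c : F) (x y e : B)
    (hz : ∀ i : ℤ, zpow2 x y i * e = q ^ (2*i) • (e * zpow2 x y i))
    (ψ : LaurentPolynomial F) :
    leval ψ c x y * e = e * leval ψ (c * q ^ 2) x y := by
  unfold _root_.leval
  rw [Finsupp.sum_mul, Finsupp.mul_sum]
  refine Finsupp.sum_congr fun i _ => ?_
  rw [smul_mul_assoc, hz, smul_smul, mul_smul_comm]
  congr 1
  rw [mul_zpow, mul_assoc]
  congr 2
  rw [← zpow_natCast q 2, ← zpow_mul]
  norm_cast

end Aux10


theorem stmt10 {F : Type*} [Field F] (q : F) (hq0 : q ≠ 0)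
    (hq : ∀ n : ℕ, 0 < n → q ^ n ≠ 1) (s t : ℤ) (hst : s ≠ t)
    (φ : LaurentPolynomial F) (hφ : φ.coeff s = 0 ∧ φ.coeff t = 0) :
    bgen q s t φ BGen.e * bgen q s t φ BGen.e * bgen q s t φ BGen.f
        - (q ^ (-2*s) + q ^ (-2*t)) •
            (bgen q s t φ BGen.e * bgen q s t φ BGen.f * bgen q s t φ BGen.e)
        + q ^ (-2*s-2*t) •
            (bgen q s t φ BGen.f * (bgen q s t φ BGen.e * bgen q s t φ BGen.e))
      = bgen q s t φ BGen.e *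
          leval (adu q s t φ) 1 (bgen q s t φ BGen.k) (bgen q s t φ BGen.kinv) := by
  classical
  open Aux10 in
  set mk := RingQuot.mkAlgHom F (BRel q s t φ) with hmk
  have hgen : ∀ g, bgen q s t φ g = mk (FreeAlgebra.ι F g) := fun g => rfl
  set E := bgen q s t φ BGen.e with hE
  set Fg := bgen q s t φ BGen.f with hF
  set K := bgen q s t φ BGen.k with hK
  set Kinv := bgen q s t φ BGen.kinv with hKinv
  set Cs := bgen q s t φ BGen.cs with hCs
  set Ct := bgen q s t φ BGen.ct with hCt
  have hkk : K * Kinv = 1 := by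
    have := RingQuot.mkAlgHom_rel F (BRel.kkinv (q := q) (s := s) (t := t) (φ := φ))
    simp [hgen] at this ⊢; exact this
  have hkk' : Kinv * K = 1 := by
    have := RingQuot.mkAlgHom_rel F (BRel.kinvk (q := q) (s := s) (t := t) (φ := φ))
    simp [hgen] at this ⊢; exact this
  have hke : K * E = q ^ 2 • (E * K) := by
    have := RingQuot.mkAlgHom_rel F (BRel.ke (q := q) (s := s) (t := t) (φ := φ))
    simp [hgen] at this ⊢; exact this
  have hcse : Cs * E = E * Cs := by
    have := RingQuot.mkAlgHom_rel F
      (BRel.csCentral (q := q) (s := s) (t := t) (φ := φ) (FreeAlgebra.ι F BGen.e))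
    simp [hgen] at this ⊢; exact this
  have hcte : Ct * E = E * Ct := by
    have := RingQuot.mkAlgHom_rel F
      (BRel.ctCentral (q := q) (s := s) (t := t) (φ := φ) (FreeAlgebra.ι F BGen.e))
    simp [hgen] at this ⊢; exact this
  set Zs := zpow2 K Kinv s with hZs
  set Zt := zpow2 K Kinv t with hZt
  set P1 := leval φ q⁻¹ K Kinv with hP1
  set P2 := leval φ q K Kinv with hP2
  set P3 := leval φ (q^3) K Kinv with hP3
  have hef : E * Fg = q ^ (-s) • (Cs * Zs) + q ^ (-t) • (Ct * Zt) + P1 := by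
    have := RingQuot.mkAlgHom_rel F (BRel.ef (q := q) (s := s) (t := t) (φ := φ))
    simp [hgen, map_add, map_mul, map_smul, leval_map, zpow2_map, hZs, hZt, hP1] at this ⊢; exact this
  have hfe : Fg * E = q ^ s • (Cs * Zs) + q ^ t • (Ct * Zt) + P2 := by
    have := RingQuot.mkAlgHom_rel F (BRel.fe (q := q) (s := s) (t := t) (φ := φ))
    simp [hgen, map_add, map_mul, map_smul, leval_map, zpow2_map, hZs, hZt, hP2] at this ⊢; exact this
  have hz : ∀ i : ℤ, zpow2 K Kinv i * E = q ^ (2*i) • (E * zpow2 K Kinv i) :=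
    zpow2_comm K Kinv E q hq0 hkk hkk' hke
  have hP1E : P1 * E = E * P2 := by
    rw [hP1, hP2, leval_mul_comm q q⁻¹ K Kinv E hz φ]
    congr 2
    field_simp
  have hP2E : P2 * E = E * P3 := by
    rw [hP2, hP3, leval_mul_comm q q K Kinv E hz φ]
    congr 2
    ring
  have hCsZsE : (Cs * Zs) * E = q ^ (2*s) • (E * (Cs * Zs)) := by
    rw [mul_assoc, hz s, mul_smul_comm, ← mul_assoc, hcse, mul_assoc]
  have hCtZtE : (Ct * Zt) * E = q ^ (2*t) • (E * (Ct * Zt)) := by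
    rw [mul_assoc, hz t, mul_smul_comm, ← mul_assoc, hcte, mul_assoc]
  have hEEF : E * E * Fg = E * P1 + q ^ (-s) • (E * (Cs * Zs)) + q ^ (-t) • (E * (Ct * Zt)) := by
    rw [mul_assoc, hef, mul_add, mul_add, mul_smul_comm, mul_smul_comm]
    abel
  have hEFE : E * Fg * E = q ^ s • (E * (Cs * Zs)) + q ^ t • (E * (Ct * Zt)) + E * P2 := by
    rw [hef, add_mul, add_mul, smul_mul_assoc, smul_mul_assoc, hCsZsE, hCtZtE, hP1E,
      smul_smul, smul_smul, ← zpow_add₀ hq0, ← zpow_add₀ hq0,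
      show -s + 2*s = s from by ring, show -t + 2*t = t from by ring]
  have hFEE : Fg * (E * E) = q ^ (3*s) • (E * (Cs * Zs)) + q ^ (3*t) • (E * (Ct * Zt)) + E * P3 := by
    rw [← mul_assoc, hfe, add_mul, add_mul, smul_mul_assoc, smul_mul_assoc, hCsZsE, hCtZtE,
      hP2E, smul_smul, smul_smul, ← zpow_add₀ hq0, ← zpow_add₀ hq0,
      show s + 2*s = 3*s from by ring, show t + 2*t = 3*t from by ring]
  have hRHS : E * leval (adu q s t φ) 1 K Kinv
      = E * P1 - (q ^ (-2*s) + q ^ (-2*t)) • (E * P2) + q ^ (-2*s-2*t) • (E * P3) := by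
    rw [leval_adu, mul_add, mul_sub, mul_smul_comm, mul_smul_comm, hP1, hP2, hP3]
  have hα : q ^ (-s) - (q ^ (-2*s) + q ^ (-2*t)) * q ^ s + q ^ (-2*s-2*t) * q ^ (3*s) = 0 := by
    rw [add_mul, ← zpow_add₀ hq0, ← zpow_add₀ hq0, ← zpow_add₀ hq0,
      show -2*s + s = -s from by ring, show -2*t + s = s - 2*t from by ring,
      show -2*s - 2*t + 3*s = s - 2*t from by ring]
    ring
  have hβ : q ^ (-t) - (q ^ (-2*s) + q ^ (-2*t)) * q ^ t + q ^ (-2*s-2*t) * q ^ (3*t) = 0 := by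
    rw [add_mul, ← zpow_add₀ hq0, ← zpow_add₀ hq0, ← zpow_add₀ hq0,
      show -2*s + t = t - 2*s from by ring, show -2*t + t = -t from by ring,
      show -2*s - 2*t + 3*t = t - 2*s from by ring]
    ring
  rw [hEEF, hEFE, hFEE, hRHS]
  match_scalars
  · ring
  · linear_combination hα
  · linear_combination hβ
  · ring
  · ring


end
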